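/- arXiv:1303.5168 — 3 statements merged into one kernel-verified Lean document; each statement's English description precedes it below -/
import Mathlib

section
/- The logarithm of the hyperdistance satisfies the triangle inequality: for all g, h ∈ GL₂⁺(ℚ), δ₁(gh) ≤ δ₁(g)·δ₁(h), where δ₁(g) = det(α_g·g) and α_g is the smallest positive rational with α_g·g ∈ M₂(ℤ). -/
open Matrix

/-- A rational 2×2 matrix has integer entries. -/
def IntEntries (m : Matrix (Fin 2) (Fin 2) ℚ) : Prop := ∀ i j, ∃ z : ℤ, m i j = (z : ℚ)

/-- `a` is the smallest positive rational making `a • g` integral. -/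
def LowestDenom (g : Matrix (Fin 2) (Fin 2) ℚ) (a : ℚ) : Prop :=
  (0 < a ∧ IntEntries (a • g)) ∧ ∀ b : ℚ, 0 < b → IntEntries (b • g) → a ≤ b

lemma IntEntries.mul {m n : Matrix (Fin 2) (Fin 2) ℚ}
    (hm : IntEntries m) (hn : IntEntries n) : IntEntries (m * n) := by
  intro i j
  obtain ⟨z0, h0⟩ := hm i 0
  obtain ⟨z1, h1⟩ := hm i 1
  obtain ⟨w0, hw0⟩ := hn 0 j
  obtain ⟨w1, hw1⟩ := hn 1 j
  exact ⟨z0 * w0 + z1 * w1, by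
    simp [Matrix.mul_apply, Fin.sum_univ_two, h0, h1, hw0, hw1]⟩

theorem delta1_submultiplicative (g h : Matrix (Fin 2) (Fin 2) ℚ)
    (hg : 0 < g.det) (hh : 0 < h.det) (a b c : ℚ)
    (ha : LowestDenom g a) (hb : LowestDenom h b) (hc : LowestDenom (g * h) c) :
    (c • (g * h)).det ≤ (a • g).det * (b • h).det := by
  obtain ⟨⟨hapos, haint⟩, _⟩ := ha
  obtain ⟨⟨hbpos, hbint⟩, _⟩ := hb
  obtain ⟨⟨hcpos, _⟩, hcmin⟩ := hc
  have key : (a * b) • (g * h) = (a • g) * (b • h) := by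
    rw [Matrix.smul_mul, Matrix.mul_smul, smul_smul, mul_comm a b]
  have hcab : c ≤ a * b := by
    apply hcmin _ (mul_pos hapos hbpos)
    rw [key]; exact haint.mul hbint
  have hd : ∀ (x : ℚ) (m : Matrix (Fin 2) (Fin 2) ℚ), (x • m).det = x ^ 2 * m.det := by
    intro x m
    rw [Matrix.det_smul]
    norm_num
  rw [hd, hd, hd, Matrix.det_mul]
  have hc2 : c ^ 2 ≤ (a * b) ^ 2 := by nlinarith
  nlinarith [mul_pos hg hh, sq_nonneg a, sq_nonneg b]
end

section
/- For g ∈ GL₂⁺(ℚ), write δ₁(g) = det(s(g)) where s(g) = α_g·g is the integral representative of g in lowest terms. If δ₁(g) = p^m · k and δ₁(h) = p^n · k' with p prime, p ∤ k, p ∤ k', and if δ₁(gh) is a power of p, then δ₁(gh) divides p^{m+n}·(kk')², confirming that paths in the p-adic tree T_p have lengths governed by p-adic valuations. -/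
open Matrix

lemma lowestDenom_dvd (g : Matrix (Fin 2) (Fin 2) ℚ) (c r : ℚ)
    (hc : LowestDenom g c) (hr : 0 < r) (hint : IntEntries (r • g)) :
    ∃ t : ℤ, r = (t : ℚ) * c := by
  obtain ⟨⟨hcpos, hcint⟩, hmin⟩ := hc
  set t : ℤ := ⌊r / c⌋ with ht
  set s : ℚ := r - (t : ℚ) * c with hs
  have hs0 : 0 ≤ s := by
    have h1 : (t : ℚ) ≤ r / c := Int.floor_le _
    have h2 : (t : ℚ) * c ≤ r := (le_div_iff₀ hcpos).mp h1
    simp only [hs]; linarith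
  have hs1 : s < c := by
    have h1 : r / c < (t : ℚ) + 1 := Int.lt_floor_add_one _
    have h2 : r < ((t : ℚ) + 1) * c := (div_lt_iff₀ hcpos).mp h1
    simp only [hs]; nlinarith
  have hsint : IntEntries (s • g) := by
    intro i j
    obtain ⟨z1, hz1⟩ := hint i j
    obtain ⟨z2, hz2⟩ := hcint i j
    refine ⟨z1 - t * z2, ?_⟩
    have hz1' : r * g i j = (z1 : ℚ) := by simpa [Matrix.smul_apply] using hz1
    have hz2' : c * g i j = (z2 : ℚ) := by simpa [Matrix.smul_apply] using hz2
    have : s * g i j = r * g i j - (t : ℚ) * (c * g i j) := by rw [hs]; ring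
    rw [Matrix.smul_apply, smul_eq_mul, this, hz1', hz2']
    push_cast
    ring
  have hs_eq : s = 0 := by
    by_contra hne
    have hspos : 0 < s := lt_of_le_of_ne hs0 (Ne.symm hne)
    have := hmin s hspos hsint
    linarith
  exact ⟨t, by linarith [hs_eq ▸ hs.symm, hs_eq]⟩

theorem delta1_padic_valuation (g h : Matrix (Fin 2) (Fin 2) ℚ)
    (hg : 0 < g.det) (hh : 0 < h.det) (a b c : ℚ)
    (ha : LowestDenom g a) (hb : LowestDenom h b) (hc : LowestDenom (g * h) c)
    (p : ℕ) (hp : p.Prime) (m n : ℕ) (k k' : ℕ)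
    (hk : ¬ p ∣ k) (hk' : ¬ p ∣ k')
    (hδg : (a • g).det = ((p : ℚ) ^ m * k)) (hδh : (b • h).det = ((p : ℚ) ^ n * k'))
    (j : ℕ) (hδgh : (c • (g * h)).det = (p : ℚ) ^ j) :
    p ^ j ∣ p ^ (m + n) * (k * k') ^ 2 := by
  obtain ⟨⟨hapos, haint⟩, -⟩ := ha
  obtain ⟨⟨hbpos, hbint⟩, -⟩ := hb
  have habpos : 0 < a * b := mul_pos hapos hbpos
  -- (a*b) • (g*h) has integer entries
  have habint : IntEntries ((a * b) • (g * h)) := by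
    intro i j
    rw [Matrix.smul_apply, Matrix.mul_apply, smul_eq_mul, Finset.mul_sum]
    have : ∀ l : Fin 2, ∃ z : ℤ, (a * b) * (g i l * h l j) = (z : ℚ) := by
      intro l
      obtain ⟨z1, hz1⟩ := haint i l
      obtain ⟨z2, hz2⟩ := hbint l j
      refine ⟨z1 * z2, ?_⟩
      have hz1' : a * g i l = (z1 : ℚ) := by simpa [Matrix.smul_apply] using hz1
      have hz2' : b * h l j = (z2 : ℚ) := by simpa [Matrix.smul_apply] using hz2
      push_cast
      rw [← hz1', ← hz2']; ring
    choose z hz using this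
    exact ⟨∑ l, z l, by push_cast; exact Finset.sum_congr rfl fun l _ => hz l⟩
  obtain ⟨t, htc⟩ := lowestDenom_dvd (g * h) c (a * b) hc habpos habint
  obtain ⟨⟨hcpos, -⟩, -⟩ := hc
  have htpos : 0 < t := by
    have : 0 < (t : ℚ) * c := htc ▸ habpos
    have ht' : (0:ℚ) < (t : ℚ) := by nlinarith
    exact_mod_cast ht'
  have card2 : Fintype.card (Fin 2) = 2 := by simp
  have e1 : a ^ 2 * g.det = (p : ℚ) ^ m * k := by
    rw [← hδg, Matrix.det_smul, card2]
  have e2 : b ^ 2 * h.det = (p : ℚ) ^ n * k' := by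
    rw [← hδh, Matrix.det_smul, card2]
  have e3 : c ^ 2 * (g.det * h.det) = (p : ℚ) ^ j := by
    rw [← hδgh, Matrix.det_smul, card2, Matrix.det_mul]
  have key : ((t : ℚ)) ^ 2 * (p : ℚ) ^ j = (p : ℚ) ^ (m + n) * (k * k') := by
    calc ((t : ℚ)) ^ 2 * (p : ℚ) ^ j = ((t : ℚ) * c) ^ 2 * (g.det * h.det) := by
          rw [← e3]; ring
      _ = (a * b) ^ 2 * (g.det * h.det) := by rw [← htc]
      _ = (a ^ 2 * g.det) * (b ^ 2 * h.det) := by ring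
      _ = ((p : ℚ) ^ m * k) * ((p : ℚ) ^ n * k') := by rw [e1, e2]
      _ = (p : ℚ) ^ (m + n) * (k * k') := by rw [pow_add]; ring
  have keyZ : t ^ 2 * (p : ℤ) ^ j = (p : ℤ) ^ (m + n) * (k * k') := by
    exact_mod_cast key
  have hdvd1 : (p : ℤ) ^ j ∣ (p : ℤ) ^ (m + n) * (k * k') :=
    ⟨t ^ 2, by linarith [keyZ]⟩
  have hdvd2 : (p : ℤ) ^ (m + n) * (k * k') ∣ (p : ℤ) ^ (m + n) * ((k : ℤ) * k') ^ 2 :=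
    mul_dvd_mul_left _ (dvd_pow_self _ two_ne_zero)
  have : (p : ℤ) ^ j ∣ (p : ℤ) ^ (m + n) * ((k : ℤ) * k') ^ 2 := hdvd1.trans hdvd2
  exact_mod_cast this
end

section
/- The function on GL₂⁺(ℚ)/ℚ* given by d(ḡ, h̄) = log δ₁(g h⁻¹) descends to a well-defined metric on PSL₂(ℤ)\PGL₂⁺(ℚ): it is well-defined on double classes, nonnegative, zero iff the classes coincide, symmetric, and satisfies the triangle inequality. -/
open Matrix

open Classical in
/-- The lowest common denominator `α_g` of a rational matrix (chosen via choice). -/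
noncomputable def alphaOf (g : Matrix (Fin 2) (Fin 2) ℚ) : ℚ :=
  if h : ∃ a : ℚ, LowestDenom g a then h.choose else 1

/-- Conway's hyperdistance `δ₁(g) = det (α_g • g)`. -/
noncomputable def delta1 (g : Matrix (Fin 2) (Fin 2) ℚ) : ℚ :=
  (alphaOf g • g).det

/-- `d(g,h) = log δ₁(g h⁻¹)`. -/
noncomputable def dist1 (g h : Matrix (Fin 2) (Fin 2) ℚ) : ℝ :=
  Real.log (delta1 (g * h⁻¹))

/-- `g` and `h` define the same class in `PSL₂(ℤ)\PGL₂⁺(ℚ)`. -/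
def SameClass (g h : Matrix (Fin 2) (Fin 2) ℚ) : Prop :=
  ∃ α : ℚ, α ≠ 0 ∧ ∃ γ : Matrix.SpecialLinearGroup (Fin 2) ℤ,
    h = α • ((γ.1.map (Int.cast : ℤ → ℚ)) * g)


namespace Conway

abbrev M2Z := Matrix (Fin 2) (Fin 2) ℤ
abbrev M2Q := Matrix (Fin 2) (Fin 2) ℚ

def cont (M : M2Z) : ℤ := Finset.gcd Finset.univ (fun p : Fin 2 × Fin 2 => M p.1 p.2)

lemma cont_dvd (M : M2Z) (i j : Fin 2) : cont M ∣ M i j :=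
  Finset.gcd_dvd (Finset.mem_univ (i, j))

lemma dvd_cont {d : ℤ} {M : M2Z} (h : ∀ i j, d ∣ M i j) : d ∣ cont M :=
  Finset.dvd_gcd (fun p _ => h p.1 p.2)

lemma cont_nonneg (M : M2Z) : 0 ≤ cont M := by
  have h : normalize (cont M) = cont M := Finset.normalize_gcd
  rw [← h, ← Int.abs_eq_normalize]; exact abs_nonneg _

def Primitive (M : M2Z) : Prop := cont M = 1

lemma cont_ne_zero {M : M2Z} (hM : M ≠ 0) : cont M ≠ 0 := by
  intro h
  apply hM
  ext i j
  have := cont_dvd M i j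
  rw [h] at this
  simpa using zero_dvd_iff.mp this

lemma eq_one_of_dvd_one_nonneg {d : ℤ} (h0 : 0 ≤ d) (h : d ∣ 1) : d = 1 := by
  rcases Int.isUnit_iff.mp (isUnit_of_dvd_one h) with h1 | h1 <;> omega

/-- decompose a nonzero integer matrix as content times primitive -/
lemma exists_primitive_decomp (N : M2Z) (hN : N ≠ 0) :
    ∃ c : ℤ, 0 < c ∧ ∃ M : M2Z, Primitive M ∧ N = c • M := by
  set c := cont N with hc
  have hc0 : c ≠ 0 := cont_ne_zero hN
  have hcpos : 0 < c := lt_of_le_of_ne (cont_nonneg N) (Ne.symm hc0)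
  refine ⟨c, hcpos, fun i j => N i j / c, ?_, ?_⟩
  · have hdvd : ∀ i j, c * cont (fun i j => N i j / c) ∣ N i j := by
      intro i j
      have h1 : cont (fun i j => N i j / c) ∣ N i j / c := cont_dvd _ i j
      have h2 : c * (N i j / c) = N i j := Int.mul_ediv_cancel' (cont_dvd N i j)
      calc c * cont (fun i j => N i j / c) ∣ c * (N i j / c) := mul_dvd_mul_left c h1
        _ = N i j := h2
    have hthis : c * cont (fun i j => N i j / c) ∣ c := dvd_cont hdvd
    have h3 : cont (fun i j => N i j / c) ∣ 1 := by
      rcases hthis with ⟨k, hk⟩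
      refine ⟨k, ?_⟩
      nth_rewrite 1 [show c = c * 1 by ring] at hk
      exact mul_left_cancel₀ hc0 (by linarith [hk])
    exact eq_one_of_dvd_one_nonneg (cont_nonneg _) h3
  · ext i j
    show N i j = c * (N i j / c)
    exact (Int.mul_ediv_cancel' (cont_dvd N i j)).symm

lemma den_smul_int (q : ℚ) : (q.den : ℚ) * q = (q.num : ℚ) := by
  have hd : (q.den : ℚ) ≠ 0 := by exact_mod_cast q.den_ne_zero
  calc (q.den : ℚ) * q = (q.den : ℚ) * ((q.num : ℚ) / (q.den : ℚ)) := by rw [Rat.num_div_den q]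
    _ = (q.num : ℚ) := by field_simp

lemma intEntries_iff {m : M2Q} (h : IntEntries m) : ∃ M : M2Z, m = M.map (Int.cast : ℤ → ℚ) := by
  refine ⟨fun i j => (h i j).choose, ?_⟩
  ext i j
  exact (h i j).choose_spec

lemma intEntries_map (M : M2Z) : IntEntries (M.map (Int.cast : ℤ → ℚ)) :=
  fun i j => ⟨M i j, rfl⟩

lemma int_of_smul_primitive {M : M2Z} (hM : Primitive M) {r : ℚ}
    (h : IntEntries (r • M.map (Int.cast : ℤ → ℚ))) : ∃ z : ℤ, r = (z : ℚ) := by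
  have hden : ∀ i j : Fin 2, (r.den : ℤ) ∣ M i j := by
    intro i j
    obtain ⟨z, hz⟩ := h i j
    simp only [Matrix.smul_apply, map_apply, smul_eq_mul] at hz
    have h3 : r.num * M i j = (r.den : ℤ) * z := by
      have h2 : (r.num : ℚ) * (M i j : ℚ) = (r.den : ℚ) * (z : ℚ) := by
        calc (r.num : ℚ) * (M i j : ℚ) = ((r.den : ℚ) * r) * M i j := by rw [den_smul_int]
        _ = (r.den : ℚ) * (r * M i j) := by ring
        _ = (r.den : ℚ) * z := by rw [hz]
      exact_mod_cast h2
    have hcop : IsCoprime (r.den : ℤ) r.num := by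
      rw [Int.isCoprime_iff_gcd_eq_one]
      unfold Int.gcd
      simpa using r.reduced.symm
    exact hcop.dvd_of_dvd_mul_left ⟨z, h3⟩
  have hd1 : (r.den : ℤ) = 1 := by
    have h2 := dvd_cont hden
    rw [hM] at h2
    exact Int.eq_one_of_dvd_one (by positivity) h2
  have hden1 : r.den = 1 := by exact_mod_cast hd1
  exact ⟨r.num, (Rat.coe_int_num_of_den_eq_one hden1).symm⟩

lemma exists_common_denom (g : M2Q) : ∃ d : ℤ, 0 < d ∧ IntEntries ((d : ℚ) • g) := by
  refine ⟨((g 0 0).den * (g 0 1).den * (g 1 0).den * (g 1 1).den : ℕ), by positivity, ?_⟩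
  intro i j
  have hdvd : (g i j).den ∣ (g 0 0).den * (g 0 1).den * (g 1 0).den * (g 1 1).den := by
    fin_cases i <;> fin_cases j <;>
      simp only [Fin.isValue] <;>
      [exact (dvd_mul_right _ _).trans (dvd_mul_right _ _) |>.trans (dvd_mul_right _ _);
       exact ((dvd_mul_left _ _).trans (dvd_mul_right _ _)).trans (dvd_mul_right _ _);
       exact (dvd_mul_left _ _).trans (dvd_mul_right _ _);
       exact dvd_mul_left _ _]
  obtain ⟨k, hk⟩ := hdvd
  refine ⟨k * (g i j).num, ?_⟩
  simp only [Matrix.smul_apply, smul_eq_mul]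
  rw [hk]
  push_cast
  rw [mul_comm ((g i j).den : ℚ) (k:ℚ), mul_assoc, den_smul_int]

lemma lowestDenom_of_primitive {α : ℚ} {M : M2Z} {g : M2Q} (hα : 0 < α) (hM : Primitive M)
    (hg : α • g = M.map (Int.cast : ℤ → ℚ)) : LowestDenom g α := by
  refine ⟨⟨hα, hg ▸ intEntries_map M⟩, ?_⟩
  intro b hb hbg
  have hba : b • g = (b / α) • M.map (Int.cast : ℤ → ℚ) := by
    rw [← hg, smul_smul]
    congr 1
    field_simp
  obtain ⟨z, hz⟩ := int_of_smul_primitive hM (hba ▸ hbg)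
  have hzq : 0 < (z : ℚ) := hz ▸ div_pos hb hα
  have hz1 : (1 : ℤ) ≤ z := by exact_mod_cast hzq
  have hz1q : (1 : ℚ) ≤ (z : ℚ) := by exact_mod_cast hz1
  have hb2 : b = (z : ℚ) * α := by
    rw [← hz]; field_simp
  nlinarith

lemma lowestDenom_unique {g : M2Q} {a b : ℚ} (ha : LowestDenom g a) (hb : LowestDenom g b) :
    a = b := le_antisymm (ha.2 b hb.1.1 hb.1.2) (hb.2 a ha.1.1 ha.1.2)

lemma alphaOf_eq {g : M2Q} {a : ℚ} (h : LowestDenom g a) : alphaOf g = a := by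
  unfold alphaOf
  have he : ∃ a : ℚ, LowestDenom g a := ⟨a, h⟩
  rw [dif_pos he]
  exact lowestDenom_unique he.choose_spec h

lemma delta1_eq {α : ℚ} {M : M2Z} {g : M2Q} (hα : 0 < α) (hM : Primitive M)
    (hg : α • g = M.map (Int.cast : ℤ → ℚ)) : delta1 g = (M.det : ℚ) := by
  unfold delta1
  rw [alphaOf_eq (lowestDenom_of_primitive hα hM hg), hg]
  rw [det_fin_two, det_fin_two]
  simp only [map_apply]
  push_cast
  ring

lemma exists_rep {g : M2Q} (hg : g ≠ 0) :
    ∃ α : ℚ, 0 < α ∧ ∃ M : M2Z, Primitive M ∧ α • g = M.map (Int.cast : ℤ → ℚ) := by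
  obtain ⟨d, hd, hdi⟩ := exists_common_denom g
  obtain ⟨N, hN⟩ := intEntries_iff hdi
  have hN0 : N ≠ 0 := by
    intro h
    apply hg
    rw [h] at hN
    have : (d : ℚ) • g = 0 := by simpa using hN
    have hd0 : (d : ℚ) ≠ 0 := by positivity
    exact (smul_eq_zero.mp this).resolve_left hd0
  obtain ⟨c, hc, M, hM, hNM⟩ := exists_primitive_decomp N hN0
  have hdq : (0:ℚ) < (d:ℚ) := by exact_mod_cast hd
  have hcq : (0:ℚ) < (c:ℚ) := by exact_mod_cast hc
  refine ⟨(d : ℚ) / (c : ℚ), by positivity, M, hM, ?_⟩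
  have hcast : N.map (Int.cast : ℤ → ℚ) = (c : ℚ) • M.map (Int.cast : ℤ → ℚ) := by
    rw [hNM]; ext i j
    simp only [Matrix.map_apply, Matrix.smul_apply, smul_eq_mul]
    push_cast; ring
  have h1 : (d : ℚ) • g = (c : ℚ) • M.map (Int.cast : ℤ → ℚ) := by rw [hN, hcast]
  calc ((d : ℚ) / (c : ℚ)) • g = ((c:ℚ)⁻¹ * (d:ℚ)) • g := by rw [div_eq_inv_mul]
    _ = (c:ℚ)⁻¹ • ((d:ℚ) • g) := by rw [mul_smul]
    _ = (c:ℚ)⁻¹ • ((c : ℚ) • M.map (Int.cast : ℤ → ℚ)) := by rw [h1]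
    _ = M.map (Int.cast : ℤ → ℚ) := by rw [smul_smul, inv_mul_cancel₀ (ne_of_gt hcq), one_smul]

/-! ### primitivity invariance -/

lemma primitive_of_dvd_all {M : M2Z} (h : ∀ d : ℤ, (∀ i j, d ∣ M i j) → d ∣ 1) :
    Primitive M := eq_one_of_dvd_one_nonneg (cont_nonneg M) (h _ (cont_dvd M))

lemma cont_dvd_mul_left (A M : M2Z) (i j : Fin 2) : cont M ∣ (A * M) i j := by
  rw [Matrix.mul_apply]
  exact Finset.dvd_sum (fun k _ => Dvd.dvd.mul_left (cont_dvd M k j) _)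

lemma cont_dvd_mul_right (M A : M2Z) (i j : Fin 2) : cont M ∣ (M * A) i j := by
  rw [Matrix.mul_apply]
  exact Finset.dvd_sum (fun k _ => Dvd.dvd.mul_right (cont_dvd M i k) _)

lemma primitive_neg {M : M2Z} (hM : Primitive M) : Primitive (-M) := by
  apply primitive_of_dvd_all
  intro d hd
  rw [← hM]
  exact dvd_cont (fun i j => by simpa using (hd i j).neg_right)

lemma primitive_mul_left (γ : Matrix.SpecialLinearGroup (Fin 2) ℤ) {M : M2Z}
    (hM : Primitive M) : Primitive (γ.1 * M) := by
  apply primitive_of_dvd_all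
  intro d hd
  rw [← hM]
  apply dvd_cont
  intro i j
  have h1 : (γ⁻¹.1 * (γ.1 * M)) = M := by
    rw [← Matrix.mul_assoc, ← Matrix.SpecialLinearGroup.coe_mul, inv_mul_cancel γ,
      Matrix.SpecialLinearGroup.coe_one, Matrix.one_mul]
  have h2 : d ∣ (γ⁻¹.1 * (γ.1 * M)) i j := by
    rw [Matrix.mul_apply]
    exact Finset.dvd_sum (fun k _ => Dvd.dvd.mul_left (hd k j) _)
  rwa [h1] at h2

lemma primitive_mul_right (γ : Matrix.SpecialLinearGroup (Fin 2) ℤ) {M : M2Z}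
    (hM : Primitive M) : Primitive (M * γ.1) := by
  apply primitive_of_dvd_all
  intro d hd
  rw [← hM]
  apply dvd_cont
  intro i j
  have h1 : ((M * γ.1) * γ⁻¹.1) = M := by
    rw [Matrix.mul_assoc, ← Matrix.SpecialLinearGroup.coe_mul, mul_inv_cancel γ,
      Matrix.SpecialLinearGroup.coe_one, Matrix.mul_one]
  have h2 : d ∣ ((M * γ.1) * γ⁻¹.1) i j := by
    rw [Matrix.mul_apply]
    exact Finset.dvd_sum (fun k _ => Dvd.dvd.mul_right (hd i k) _)
  rwa [h1] at h2

lemma cont_dvd_det (M : M2Z) : cont M ∣ M.det := by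
  rw [Matrix.det_fin_two]
  exact dvd_sub ((cont_dvd M 0 0).mul_right _) ((cont_dvd M 0 1).mul_right _)

lemma primitive_of_det_one {M : M2Z} (h : M.det = 1) : Primitive M :=
  eq_one_of_dvd_one_nonneg (cont_nonneg M) (h ▸ cont_dvd_det M)

lemma primitive_adjugate {M : M2Z} (hM : Primitive M) : Primitive M.adjugate := by
  apply primitive_of_dvd_all
  intro d hd
  rw [← hM]
  apply dvd_cont
  intro i j
  have ha := Matrix.adjugate_fin_two M
  have h00 : M.adjugate 0 0 = M 1 1 := by rw [ha]; rfl
  have h01 : M.adjugate 0 1 = -(M 0 1) := by rw [ha]; rfl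
  have h10 : M.adjugate 1 0 = -(M 1 0) := by rw [ha]; rfl
  have h11 : M.adjugate 1 1 = M 0 0 := by rw [ha]; rfl
  fin_cases i <;> fin_cases j
  · exact h11 ▸ hd 1 1
  · have h := hd 0 1; rw [h01] at h; exact dvd_neg.mp h
  · have h := hd 1 0; rw [h10] at h; exact dvd_neg.mp h
  · exact h00 ▸ hd 0 0

/-! ### map cast helpers -/

lemma map_cast_mul (A B : M2Z) :
    (A * B).map (Int.cast : ℤ → ℚ) = A.map (Int.cast : ℤ → ℚ) * B.map (Int.cast : ℤ → ℚ) := by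
  have h := Matrix.map_mul (L := A) (M := B) (f := Int.castRingHom ℚ)
  simpa using h

lemma map_cast_one : (1 : M2Z).map (Int.cast : ℤ → ℚ) = 1 :=
  Matrix.map_one _ Int.cast_zero Int.cast_one

lemma det_map_cast (M : M2Z) : (M.map (Int.cast : ℤ → ℚ)).det = (M.det : ℚ) := by
  rw [Matrix.det_fin_two, Matrix.det_fin_two]
  simp only [Matrix.map_apply]
  push_cast
  ring

lemma ne_zero_of_det_ne_zero {g : M2Q} (h : g.det ≠ 0) : g ≠ 0 := by
  intro h0
  apply h
  rw [h0, Matrix.det_fin_two]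
  simp

/-! ### delta1 properties -/

lemma delta1_eq_int {α : ℚ} {M : M2Z} {g : M2Q} (hα : 0 < α) (hM : Primitive M)
    (hg : α • g = M.map (Int.cast : ℤ → ℚ)) (hdet : 0 < g.det) :
    delta1 g = (M.det : ℚ) ∧ 0 < M.det := by
  refine ⟨delta1_eq hα hM hg, ?_⟩
  have h1 : ((α • g).det) = α ^ 2 * g.det := by
    rw [Matrix.det_smul]; norm_num
  have h2 : (M.det : ℚ) = α ^ 2 * g.det := by
    rw [← h1, hg, det_map_cast]
  have : (0:ℚ) < (M.det : ℚ) := by rw [h2]; positivity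
  exact_mod_cast this

lemma delta1_ge_one {g : M2Q} (hdet : 0 < g.det) : 1 ≤ delta1 g := by
  obtain ⟨α, hα, M, hM, hg⟩ := exists_rep (ne_zero_of_det_ne_zero (ne_of_gt hdet))
  obtain ⟨h1, h2⟩ := delta1_eq_int hα hM hg hdet
  rw [h1]
  exact_mod_cast h2

lemma delta1_smul {c : ℚ} (hc : c ≠ 0) {g : M2Q} (hg0 : g ≠ 0) :
    delta1 (c • g) = delta1 g := by
  obtain ⟨α, hα, M, hM, hg⟩ := exists_rep hg0
  rcases lt_or_gt_of_ne hc with hneg | hpos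
  · have hcpos : 0 < -c := by linarith
    have key : (α / (-c)) • (c • g) = (-M).map (Int.cast : ℤ → ℚ) := by
      rw [smul_smul]
      have hcc : α / (-c) * c = -α := by field_simp
      rw [hcc]
      ext i j
      have h := congrFun (congrFun hg i) j
      simp only [Matrix.smul_apply, Matrix.map_apply, Matrix.neg_apply, smul_eq_mul] at *
      push_cast
      linarith
    rw [delta1_eq (div_pos hα hcpos) (primitive_neg hM) key,
      delta1_eq hα hM hg]
    have : (-M).det = M.det := by
      rw [Matrix.det_neg]; norm_num
    rw [this]
  · have key : (α / c) • (c • g) = M.map (Int.cast : ℤ → ℚ) := by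
      rw [smul_smul, div_mul_cancel₀ _ hc, hg]
    rw [delta1_eq (by positivity) hM key, delta1_eq hα hM hg]

lemma delta1_sl_left (γ : Matrix.SpecialLinearGroup (Fin 2) ℤ) {g : M2Q} (hg0 : g ≠ 0) :
    delta1 ((γ.1.map (Int.cast : ℤ → ℚ)) * g) = delta1 g := by
  obtain ⟨α, hα, M, hM, hg⟩ := exists_rep hg0
  have key : α • ((γ.1.map (Int.cast : ℤ → ℚ)) * g) = (γ.1 * M).map (Int.cast : ℤ → ℚ) := by
    rw [← Matrix.mul_smul, hg, map_cast_mul]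
  rw [delta1_eq hα (primitive_mul_left γ hM) key, delta1_eq hα hM hg]
  rw [Matrix.det_mul, γ.2, one_mul]

lemma delta1_sl_right (γ : Matrix.SpecialLinearGroup (Fin 2) ℤ) {g : M2Q} (hg0 : g ≠ 0) :
    delta1 (g * (γ.1.map (Int.cast : ℤ → ℚ))) = delta1 g := by
  obtain ⟨α, hα, M, hM, hg⟩ := exists_rep hg0
  have key : α • (g * (γ.1.map (Int.cast : ℤ → ℚ))) = (M * γ.1).map (Int.cast : ℤ → ℚ) := by
    rw [← Matrix.smul_mul, hg, map_cast_mul]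
  rw [delta1_eq hα (primitive_mul_right γ hM) key, delta1_eq hα hM hg]
  rw [Matrix.det_mul, γ.2, mul_one]


lemma det_sl_map (γ : Matrix.SpecialLinearGroup (Fin 2) ℤ) :
    ((γ.1.map (Int.cast : ℤ → ℚ))).det = 1 := by
  rw [det_map_cast, γ.2]; norm_num

lemma sl_map_mul_inv (γ : Matrix.SpecialLinearGroup (Fin 2) ℤ) :
    (γ⁻¹.1.map (Int.cast : ℤ → ℚ)) * (γ.1.map (Int.cast : ℤ → ℚ)) = 1 := by
  rw [← map_cast_mul, ← Matrix.SpecialLinearGroup.coe_mul, inv_mul_cancel γ,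
    Matrix.SpecialLinearGroup.coe_one, map_cast_one]

lemma delta1_sl (γ : Matrix.SpecialLinearGroup (Fin 2) ℤ) :
    delta1 (γ.1.map (Int.cast : ℤ → ℚ)) = 1 := by
  have h := delta1_eq one_pos (primitive_of_det_one γ.2)
    (one_smul ℚ (γ.1.map (Int.cast : ℤ → ℚ)))
  rw [h, γ.2]; norm_num

lemma delta1_inv {g : M2Q} (h : 0 < g.det) : delta1 g⁻¹ = delta1 g := by
  obtain ⟨α, hα, M, hM, hg⟩ := exists_rep (ne_zero_of_det_ne_zero h.ne')
  obtain ⟨hd1, hdM⟩ := delta1_eq_int hα hM hg h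
  have hnq : (0:ℚ) < (M.det : ℚ) := by exact_mod_cast hdM
  have hmapadj : M.adjugate.map (Int.cast : ℤ → ℚ) = (M.map (Int.cast : ℤ → ℚ)).adjugate := by
    have h2 := RingHom.map_adjugate (Int.castRingHom ℚ) M
    simpa using h2
  have hadj : (M.adjugate.map (Int.cast : ℤ → ℚ)) * (M.map (Int.cast : ℤ → ℚ))
      = ((M.det : ℚ)) • 1 := by
    rw [hmapadj, Matrix.adjugate_mul, det_map_cast]
  have hginv : g⁻¹ = (α / (M.det : ℚ)) • (M.adjugate.map (Int.cast : ℤ → ℚ)) := by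
    apply Matrix.inv_eq_left_inv
    have hgM : g = α⁻¹ • M.map (Int.cast : ℤ → ℚ) := by
      rw [← hg, smul_smul, inv_mul_cancel₀ hα.ne', one_smul]
    rw [hgM, Matrix.smul_mul, Matrix.mul_smul, hadj, smul_smul, smul_smul]
    have h9 : α / (M.det : ℚ) * α⁻¹ * (M.det : ℚ) = 1 := by field_simp
    rw [h9, one_smul]
  have key : ((M.det : ℚ) / α) • g⁻¹ = M.adjugate.map (Int.cast : ℤ → ℚ) := by
    rw [hginv, smul_smul]
    have : (M.det : ℚ) / α * (α / (M.det : ℚ)) = 1 := by field_simp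
    rw [this, one_smul]
  rw [delta1_eq (div_pos hnq hα) (primitive_adjugate hM) key, hd1]
  rw [Matrix.det_adjugate]
  norm_num

lemma delta1_mul {g h : M2Q} (hg : 0 < g.det) (hh : 0 < h.det) :
    ∃ c : ℤ, 1 ≤ c ∧ delta1 g * delta1 h = ((c : ℚ))^2 * delta1 (g * h) := by
  obtain ⟨α, hα, M, hM, hgM⟩ := exists_rep (ne_zero_of_det_ne_zero hg.ne')
  obtain ⟨β, hβ, N, hN, hhN⟩ := exists_rep (ne_zero_of_det_ne_zero hh.ne')
  obtain ⟨hd1, hdM⟩ := delta1_eq_int hα hM hgM hg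
  obtain ⟨hd2, hdN⟩ := delta1_eq_int hβ hN hhN hh
  have hprod : (α * β) • (g * h) = (M * N).map (Int.cast : ℤ → ℚ) := by
    rw [map_cast_mul, ← hgM, ← hhN, Matrix.smul_mul, Matrix.mul_smul, smul_smul]
  have hMN0 : M * N ≠ 0 := by
    intro h0
    have : (M * N).det = 0 := by rw [h0, Matrix.det_fin_two]; simp
    rw [Matrix.det_mul] at this
    nlinarith
  obtain ⟨c, hc, P, hP, hMNP⟩ := exists_primitive_decomp (M * N) hMN0
  have hcq : (0:ℚ) < (c:ℚ) := by exact_mod_cast hc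
  have hkey : ((α * β) / (c : ℚ)) • (g * h) = P.map (Int.cast : ℤ → ℚ) := by
    have hcast : (M * N).map (Int.cast : ℤ → ℚ) = (c : ℚ) • P.map (Int.cast : ℤ → ℚ) := by
      rw [hMNP]; ext i j
      simp only [Matrix.map_apply, Matrix.smul_apply, smul_eq_mul]
      push_cast; ring
    rw [div_eq_inv_mul, mul_smul, hprod, hcast, smul_smul,
      inv_mul_cancel₀ hcq.ne', one_smul]
  have hd3 : delta1 (g * h) = (P.det : ℚ) :=
    delta1_eq (by positivity) hP hkey
  refine ⟨c, hc, ?_⟩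
  have hdet : M.det * N.det = c ^ 2 * P.det := by
    have := congrArg Matrix.det hMNP
    rw [Matrix.det_mul, Matrix.det_smul] at this
    simpa [Fintype.card_fin] using this
  rw [hd1, hd2, hd3]
  exact_mod_cast congrArg (fun z : ℤ => (z : ℚ)) hdet

lemma smul_ne_zero_mat {c : ℚ} (hc : c ≠ 0) {A : M2Q} (hA : A.det ≠ 0) : (c • A).det ≠ 0 := by
  rw [Matrix.det_smul]
  simp only [Fintype.card_fin]
  exact mul_ne_zero (pow_ne_zero 2 hc) hA


lemma isUnit_det_of_pos {h : M2Q} (hh : 0 < h.det) : IsUnit h.det :=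
  isUnit_iff_ne_zero.mpr hh.ne'

lemma det_mul_inv_pos {g h : M2Q} (hg : 0 < g.det) (hh : 0 < h.det) : 0 < (g * h⁻¹).det := by
  rw [Matrix.det_mul, Matrix.det_nonsing_inv, Ring.inverse_eq_inv]
  exact mul_pos hg (inv_pos.2 hh)

lemma mul_inv_cancel_mat {g h : M2Q} (hh : 0 < h.det) : (g * h⁻¹) * h = g := by
  rw [Matrix.mul_assoc, Matrix.nonsing_inv_mul h (isUnit_det_of_pos hh), Matrix.mul_one]

/-- the key computation for part 1 -/
lemma delta1_invariant {g h : M2Q} (hg : 0 < g.det) (hh : 0 < h.det)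
    {a b : ℚ} (ha : a ≠ 0) (hb : b ≠ 0) (γ γ' : Matrix.SpecialLinearGroup (Fin 2) ℤ) :
    delta1 ((a • ((γ.1.map (Int.cast : ℤ → ℚ)) * g)) * (b • ((γ'.1.map (Int.cast : ℤ → ℚ)) * h))⁻¹)
      = delta1 (g * h⁻¹) := by
  have hhu : IsUnit h.det := isUnit_det_of_pos hh
  have hinv : (b • ((γ'.1.map (Int.cast : ℤ → ℚ)) * h))⁻¹
      = b⁻¹ • (h⁻¹ * (γ'⁻¹.1.map (Int.cast : ℤ → ℚ))) := by
    apply Matrix.inv_eq_left_inv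
    rw [Matrix.smul_mul, Matrix.mul_smul, smul_smul, inv_mul_cancel₀ hb, one_smul,
      Matrix.mul_assoc, ← Matrix.mul_assoc (γ'⁻¹.1.map (Int.cast : ℤ → ℚ)), sl_map_mul_inv,
      Matrix.one_mul, Matrix.nonsing_inv_mul h hhu]
  have hexp : (a • ((γ.1.map (Int.cast : ℤ → ℚ)) * g)) * (b • ((γ'.1.map (Int.cast : ℤ → ℚ)) * h))⁻¹
      = (a * b⁻¹) • ((γ.1.map (Int.cast : ℤ → ℚ)) * (((g * h⁻¹) * (γ'⁻¹.1.map (Int.cast : ℤ → ℚ))))) := by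
    rw [hinv, Matrix.smul_mul, Matrix.mul_smul, smul_smul]
    congr 1
    rw [Matrix.mul_assoc, Matrix.mul_assoc]
  have hZ : 0 < (g * h⁻¹).det := det_mul_inv_pos hg hh
  have hY : ((g * h⁻¹) * (γ'⁻¹.1.map (Int.cast : ℤ → ℚ))).det ≠ 0 := by
    rw [Matrix.det_mul, det_sl_map]; simpa using hZ.ne'
  have hX : ((γ.1.map (Int.cast : ℤ → ℚ)) * (((g * h⁻¹) * (γ'⁻¹.1.map (Int.cast : ℤ → ℚ))))).det ≠ 0 := by
    rw [Matrix.det_mul, det_sl_map, one_mul]; exact hY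
  rw [hexp, delta1_smul (mul_ne_zero ha (inv_ne_zero hb)) (ne_zero_of_det_ne_zero hX),
    delta1_sl_left γ (ne_zero_of_det_ne_zero hY),
    delta1_sl_right γ'⁻¹ (ne_zero_of_det_ne_zero hZ.ne')]

lemma sameClass_of_delta1_one {g h : M2Q} (hg : 0 < g.det) (hh : 0 < h.det)
    (hd : delta1 (g * h⁻¹) = 1) : SameClass g h := by
  have hZ : 0 < (g * h⁻¹).det := det_mul_inv_pos hg hh
  obtain ⟨α, hα, M, hM, hgh⟩ := exists_rep (ne_zero_of_det_ne_zero hZ.ne')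
  obtain ⟨hd1, hdM⟩ := delta1_eq_int hα hM hgh hZ
  have hdet1 : M.det = 1 := by
    have : (M.det : ℚ) = 1 := by rw [← hd1, hd]
    exact_mod_cast this
  set γ : Matrix.SpecialLinearGroup (Fin 2) ℤ := ⟨M, hdet1⟩ with hγ
  have hαg : α • g = (γ.1.map (Int.cast : ℤ → ℚ)) * h := by
    have := congrArg (fun X => X * h) hgh
    rw [Matrix.smul_mul, mul_inv_cancel_mat hh] at this
    rw [this]
  refine ⟨α, hα.ne', γ⁻¹, ?_⟩
  rw [← Matrix.mul_smul, hαg, ← Matrix.mul_assoc, sl_map_mul_inv, Matrix.one_mul]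

lemma delta1_one_of_sameClass {g h : M2Q} (hg : 0 < g.det) (hh : 0 < h.det)
    (hs : SameClass g h) : delta1 (g * h⁻¹) = 1 := by
  obtain ⟨a, ha, γ, rfl⟩ := hs
  have hgu : IsUnit g.det := isUnit_det_of_pos hg
  have hinv : (a • ((γ.1.map (Int.cast : ℤ → ℚ)) * g))⁻¹
      = a⁻¹ • (g⁻¹ * (γ⁻¹.1.map (Int.cast : ℤ → ℚ))) := by
    apply Matrix.inv_eq_left_inv
    rw [Matrix.smul_mul, Matrix.mul_smul, smul_smul, inv_mul_cancel₀ ha, one_smul,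
      Matrix.mul_assoc, ← Matrix.mul_assoc (γ⁻¹.1.map (Int.cast : ℤ → ℚ)), sl_map_mul_inv,
      Matrix.one_mul, Matrix.nonsing_inv_mul g hgu]
  have hexp : g * (a • ((γ.1.map (Int.cast : ℤ → ℚ)) * g))⁻¹
      = a⁻¹ • (γ⁻¹.1.map (Int.cast : ℤ → ℚ)) := by
    rw [hinv, Matrix.mul_smul, ← Matrix.mul_assoc, Matrix.mul_nonsing_inv g hgu, Matrix.one_mul]
  rw [hexp, delta1_smul (inv_ne_zero ha)
    (ne_zero_of_det_ne_zero (by rw [det_sl_map]; norm_num)), delta1_sl]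

end Conway

/-- `log δ₁(g h⁻¹)` descends to a well-defined metric on `PSL₂(ℤ)\PGL₂⁺(ℚ)`. -/
theorem dist1_is_metric_on_classes :
    (∀ g g' h h' : Matrix (Fin 2) (Fin 2) ℚ, 0 < g.det → 0 < h.det →
      SameClass g g' → SameClass h h' → dist1 g h = dist1 g' h') ∧
    (∀ g h : Matrix (Fin 2) (Fin 2) ℚ, 0 < g.det → 0 < h.det → 0 ≤ dist1 g h) ∧
    (∀ g h : Matrix (Fin 2) (Fin 2) ℚ, 0 < g.det → 0 < h.det →
      (dist1 g h = 0 ↔ SameClass g h)) ∧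
    (∀ g h : Matrix (Fin 2) (Fin 2) ℚ, 0 < g.det → 0 < h.det →
      dist1 g h = dist1 h g) ∧
    (∀ g h k : Matrix (Fin 2) (Fin 2) ℚ, 0 < g.det → 0 < h.det → 0 < k.det →
      dist1 g k ≤ dist1 g h + dist1 h k) := by
  open Conway in
  refine ⟨?_, ?_, ?_, ?_, ?_⟩
  · -- well-defined
    intro g g' h h' hg hh h1 h2
    obtain ⟨a, ha, γ, rfl⟩ := h1
    obtain ⟨b, hb, γ', rfl⟩ := h2
    unfold dist1
    rw [delta1_invariant hg hh ha hb γ γ']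
  · -- nonneg
    intro g h hg hh
    apply Real.log_nonneg
    have := delta1_ge_one (det_mul_inv_pos hg hh)
    exact_mod_cast this
  · -- zero iff same class
    intro g h hg hh
    have h1 : (1:ℚ) ≤ delta1 (g * h⁻¹) := delta1_ge_one (det_mul_inv_pos hg hh)
    constructor
    · intro h0
      unfold dist1 at h0
      rcases Real.log_eq_zero.mp h0 with hc | hc | hc
      · exfalso
        have : ((delta1 (g * h⁻¹) : ℝ)) = 0 := hc
        have : delta1 (g * h⁻¹) = 0 := by exact_mod_cast this
        linarith
      · have : delta1 (g * h⁻¹) = 1 := by exact_mod_cast hc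
        exact sameClass_of_delta1_one hg hh this
      · exfalso
        have : delta1 (g * h⁻¹) = -1 := by exact_mod_cast hc
        linarith
    · intro hs
      unfold dist1
      rw [delta1_one_of_sameClass hg hh hs]
      simp
  · -- symm
    intro g h hg hh
    unfold dist1
    have hZ : 0 < (g * h⁻¹).det := det_mul_inv_pos hg hh
    have hflip : (g * h⁻¹)⁻¹ = h * g⁻¹ := by
      apply Matrix.inv_eq_left_inv
      rw [Matrix.mul_assoc, ← Matrix.mul_assoc g⁻¹, Matrix.nonsing_inv_mul g (isUnit_det_of_pos hg),
        Matrix.one_mul, Matrix.mul_nonsing_inv h (isUnit_det_of_pos hh)]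
    rw [← hflip, delta1_inv hZ]
  · -- triangle
    intro g h k hg hh hk
    unfold dist1
    have hgh : 0 < (g * h⁻¹).det := det_mul_inv_pos hg hh
    have hhk : 0 < (h * k⁻¹).det := det_mul_inv_pos hh hk
    have hgk : 0 < (g * k⁻¹).det := det_mul_inv_pos hg hk
    have hsplit : g * k⁻¹ = (g * h⁻¹) * (h * k⁻¹) := by
      rw [Matrix.mul_assoc, ← Matrix.mul_assoc h⁻¹, Matrix.nonsing_inv_mul h (isUnit_det_of_pos hh),
        Matrix.one_mul]
    obtain ⟨c, hc, hmul⟩ := delta1_mul hgh hhk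
    have h1 : (1:ℚ) ≤ delta1 (g * h⁻¹) := delta1_ge_one hgh
    have h2 : (1:ℚ) ≤ delta1 (h * k⁻¹) := delta1_ge_one hhk
    have h3 : (1:ℚ) ≤ delta1 ((g * h⁻¹) * (h * k⁻¹)) := by
      rw [← hsplit]; exact delta1_ge_one hgk
    have hcq : (1:ℚ) ≤ (c:ℚ) := by exact_mod_cast hc
    have hc2 : (1:ℚ) ≤ (c:ℚ)^2 := by nlinarith
    have hle : delta1 ((g * h⁻¹) * (h * k⁻¹)) ≤ delta1 (g * h⁻¹) * delta1 (h * k⁻¹) := by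
      have h4 := mul_le_mul_of_nonneg_right hc2 (by linarith : (0:ℚ) ≤ delta1 ((g * h⁻¹) * (h * k⁻¹)))
      rw [one_mul] at h4
      linarith
    rw [hsplit]
    calc Real.log ((delta1 ((g * h⁻¹) * (h * k⁻¹)) : ℝ))
        ≤ Real.log ((delta1 (g * h⁻¹) * delta1 (h * k⁻¹) : ℚ) : ℝ) := by
          rw [Real.log_le_log_iff (by exact_mod_cast lt_of_lt_of_le one_pos h3)
            (by exact_mod_cast (by nlinarith : (0:ℚ) < delta1 (g * h⁻¹) * delta1 (h * k⁻¹)))]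
          exact_mod_cast hle
      _ = Real.log ((delta1 (g * h⁻¹) : ℝ)) + Real.log ((delta1 (h * k⁻¹) : ℝ)) := by
          push_cast
          exact Real.log_mul (by positivity) (by positivity)
end
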